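/- Let H ∈ 𝔽₂^{n×n} be a w-regular matrix whose Tanner graph is connected, let m ≥ 1, and let H̃ = H ⊗ J_m ∈ 𝔽₂^{mn×mn}, where J_m is the m×m all-ones matrix. Let μ₂ be the second largest eigenvalue of the real matrix HᵀH. Then every nonzero pseudocodeword x ∈ K(H̃) satisfies w_AWGNC(x) ≥ n·(2w − mμ₂)/(w² − μ₂). -/

import Mathlib

open Matrix BigOperators Finset

section Defs

variable {J I : Type*} [Fintype J] [Fintype I] [DecidableEq I]

/-- The support of row `j` of a binary matrix `H`. -/
def rowSupp (H : Matrix J I (ZMod 2)) (j : J) : Finset I :=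
  Finset.univ.filter fun i => H j i = 1

/-- The fundamental cone of a binary matrix `H`. -/
def fundCone (H : Matrix J I (ZMod 2)) : Set (I → ℝ) :=
  {x | (∀ i, 0 ≤ x i) ∧
    ∀ j : J, ∀ ℓ ∈ rowSupp H j, x ℓ ≤ ∑ i ∈ (rowSupp H j).erase ℓ, x i}

/-- BEC pseudoweight: size of the support. -/
noncomputable def wBEC (x : I → ℝ) : ℝ := ({i | x i ≠ 0}.ncard : ℝ)

/-- AWGNC pseudoweight. -/
noncomputable def wAWGNC (x : I → ℝ) : ℝ := (∑ i, x i) ^ 2 / ∑ i, x i ^ 2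

/-- Max-fractional weight. -/
noncomputable def wMaxFrac (x : I → ℝ) : ℝ := (∑ i, x i) / sSup (Set.range x)

/-- `H` is a parity-check matrix of the code `C`. -/
def IsParityCheck (H : Matrix J I (ZMod 2)) (C : Submodule (ZMod 2) (I → ZMod 2)) : Prop :=
  ∀ c, c ∈ C ↔ H.mulVec c = 0

/-- Minimum Hamming distance of a code. -/
noncomputable def minDist (C : Submodule (ZMod 2) (I → ZMod 2)) : ℕ :=
  sInf {d | ∃ c ∈ C, c ≠ 0 ∧ hammingNorm c = d}

/-- Minimum pseudoweight of `H` w.r.t. pseudoweight function `w`: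
the infimum of `w` over all nonzero pseudocodewords (`⊤` if there are none). -/
noncomputable def minPW (w : (I → ℝ) → ℝ) (H : Matrix J I (ZMod 2)) : EReal :=
  sInf ((fun x => (w x : EReal)) '' (fundCone H \ {0}))

/-- The chain (connectivity) relation associated with a binary matrix whose rows
have weight 2: `i` and `i'` are related iff they are equal or joined by a chain of rows
whose supports are exactly consecutive pairs. -/
def chainRel (H : Matrix J I (ZMod 2)) (i i' : I) : Prop :=
  i = i' ∨ ∃ ℓ : ℕ, 1 ≤ ℓ ∧ ∃ (c : Fin (ℓ + 1) → I) (r : Fin ℓ → J),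
    c 0 = i ∧ c (Fin.last ℓ) = i' ∧
    ∀ t : Fin ℓ, rowSupp H (r t) = {c t.castSucc, c t.succ}

/-- The 0-1 real matrix associated with a binary matrix. -/
def toRealMatrix (H : Matrix J I (ZMod 2)) : Matrix J I ℝ :=
  Matrix.of fun j i => if H j i = 1 then (1 : ℝ) else 0

/-- The Tanner graph of a binary matrix. -/
def tannerGraph (H : Matrix J I (ZMod 2)) : SimpleGraph (J ⊕ I) :=
  SimpleGraph.fromRel fun u v => ∃ j i, u = Sum.inl j ∧ v = Sum.inr i ∧ H j i = 1

end Defs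

/-- The multiset of (real) eigenvalues, with multiplicity, of a real square matrix:
the real roots of its characteristic polynomial. -/
noncomputable def eigMult {ι : Type*} [Fintype ι] [DecidableEq ι] (A : Matrix ι ι ℝ) :
    Multiset ℝ :=
  A.charpoly.roots

section FinDefs

variable {n : ℕ}

/-- The non-increasing rearrangement of a real vector. -/
noncomputable def sortDesc (x : Fin n → ℝ) : Fin n → ℝ :=
  fun i => x (Tuple.sort (fun j => -x j) i)

/-- `Φ(ξ) = ∫₀^ξ φ`, where `φ(ξ) = x'_i` for `i - 1 < ξ ≤ i` and `x'` is the
non-increasing rearrangement of `x`. -/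
noncomputable def bigPhi (x : Fin n → ℝ) (ξ : ℝ) : ℝ :=
  ∑ i : Fin n, sortDesc x i * min 1 (max 0 (ξ - (i : ℝ)))

/-- BSC pseudoweight: `2 Φ⁻¹(Φ(n)/2)`. -/
noncomputable def wBSC (x : Fin n → ℝ) : ℝ :=
  2 * sInf {ξ : ℝ | bigPhi x (n : ℝ) / 2 ≤ bigPhi x ξ}

/-- The pseudocodeword redundancy of a code `C` w.r.t. the pseudoweight function `w`:
the smallest number of rows of a parity-check matrix `H` of `C` whose minimum
pseudoweight equals the minimum distance of `C` (`⊤` if there is no such matrix). -/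
noncomputable def pcRedundancy (w : (Fin n → ℝ) → ℝ)
    (C : Submodule (ZMod 2) (Fin n → ZMod 2)) : ℕ∞ :=
  sInf {k : ℕ∞ | ∃ (m : ℕ) (H : Matrix (Fin m) (Fin n) (ZMod 2)),
    k = (m : ℕ∞) ∧ IsParityCheck H C ∧ minPW w H = ((minDist C : ℝ) : EReal)}

end FinDefs


/-- Auxiliary: the roots of the characteristic polynomial of a real symmetric matrix are
exactly its eigenvalues (with multiplicity). -/
lemma aux_hermitian_charpoly_roots {n : ℕ} (A : Matrix (Fin n) (Fin n) ℝ) (hA : A.IsHermitian) :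
    A.charpoly.roots = Multiset.map hA.eigenvalues Finset.univ.val := by
  classical
  open Polynomial in
  set μ := hA.eigenvalues with hμ
  set b := hA.eigenvectorBasis with hb
  have hmat : LinearMap.toMatrix (PiLp.basisFun 2 ℝ (Fin n)) (PiLp.basisFun 2 ℝ (Fin n))
      (Matrix.toEuclideanLin A) = A := by
    rw [Matrix.toEuclideanLin_eq_toLin, LinearMap.toMatrix_toLin]
  have hdiag : LinearMap.toMatrix b.toBasis b.toBasis (Matrix.toEuclideanLin A)
      = Matrix.diagonal μ := by
    apply Matrix.ext; intro i j
    rw [LinearMap.toMatrix_apply]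
    have h2 : Matrix.toEuclideanLin A (b.toBasis j) = μ j • (b.toBasis j) := by
      rw [OrthonormalBasis.coe_toBasis]
      apply (WithLp.equiv 2 (Fin n → ℝ)).injective
      change A *ᵥ WithLp.ofLp (b j) = WithLp.ofLp (μ j • b j)
      simpa using hA.mulVec_eigenvectorBasis j
    rw [h2, LinearEquiv.map_smul, Module.Basis.repr_self]
    simp only [Finsupp.smul_single, smul_eq_mul, mul_one, Finsupp.single_apply,
      Matrix.diagonal_apply]
    split
    · next hh => subst hh; rw [if_pos rfl]
    · next hh => rw [if_neg (fun h' => hh h'.symm)]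
  have hcp : A.charpoly = (Matrix.diagonal μ).charpoly := by
    rw [← hmat, ← hdiag, LinearMap.charpoly_toMatrix, LinearMap.charpoly_toMatrix]
  have hdiagcp : (Matrix.diagonal μ).charpoly = ∏ i, (X - C (μ i)) := by
    rw [Matrix.charpoly]
    have h3 : charmatrix (Matrix.diagonal μ) = Matrix.diagonal fun i => X - C (μ i) := by
      apply Matrix.ext; intro i j
      by_cases h : i = j
      · subst h; simp [charmatrix_apply_eq]
      · rw [charmatrix_apply_ne _ _ _ h, Matrix.diagonal_apply_ne _ h,
          Matrix.diagonal_apply_ne _ h, map_zero, neg_zero]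
    rw [h3, Matrix.det_diagonal]
  rw [hcp, hdiagcp]
  have h4 : ∏ i, (X - C (μ i))
      = (Multiset.map (fun a => X - C a) (Multiset.map μ Finset.univ.val)).prod := by
    rw [Multiset.map_map]; rfl
  rw [h4, Polynomial.roots_multiset_prod_X_sub_C]

set_option maxHeartbeats 2000000 in
/-- Let `H` be an `n × n` `w`-regular binary matrix with connected Tanner
graph, `m ≥ 1`, and `H̃ = H ⊗ J_m` (Kronecker product with the `m × m` all-ones matrix,
over `𝔽₂`).  Let `μ₂` be the second largest eigenvalue (with multiplicity) of the real
matrix `HᵀH` (whose largest eigenvalue is `w²`).  Then every nonzero pseudocodeword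
`x ∈ K(H̃)` satisfies `w_AWGNC(x) ≥ n (2w - m μ₂) / (w² - μ₂)`. -/
theorem statement13 {n m : ℕ} (hm : 1 ≤ m) (H : Matrix (Fin n) (Fin n) (ZMod 2)) (w : ℕ)
    (hrow : ∀ j, (rowSupp H j).card = w)
    (hcol : ∀ i, (Finset.univ.filter fun j => H j i = 1).card = w)
    (hconn : (tannerGraph H).Connected)
    (Ht : Matrix (Fin n × Fin m) (Fin n × Fin m) (ZMod 2))
    (hHt : Ht = Matrix.kroneckerMap (· * ·) H (Matrix.of fun _ _ => (1 : ZMod 2)))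
    (μ₂ : ℝ)
    (hμ₂ : μ₂ ∈ (eigMult ((toRealMatrix H)ᵀ * toRealMatrix H)).erase ((w : ℝ) ^ 2) ∧
      ∀ x ∈ (eigMult ((toRealMatrix H)ᵀ * toRealMatrix H)).erase ((w : ℝ) ^ 2), x ≤ μ₂) :
    ∀ x ∈ fundCone Ht \ {0},
      (n : ℝ) * (2 * (w : ℝ) - (m : ℝ) * μ₂) / ((w : ℝ) ^ 2 - μ₂) ≤ wAWGNC x := by
  classical
  intro x hx
  obtain ⟨⟨hxnn, hcone⟩, hx0⟩ := hx
  haveI hnem : Nonempty (Fin n) := by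
    rcases hconn.nonempty with ⟨u⟩
    cases u with
    | inl j => exact ⟨j⟩
    | inr i => exact ⟨i⟩
  have hn0 : 0 < n := by
    have := Fintype.card_pos_iff.mpr hnem
    simpa using this
  have hncast : (0:ℝ) < (n:ℝ) := by exact_mod_cast hn0
  set L := toRealMatrix H with hLdef
  set A := Lᵀ * L with hAdef
  -- basic facts about L
  have hLmem : ∀ j i, L j i = if H j i = 1 then (1:ℝ) else 0 := fun _ _ => rfl
  have hLnn : ∀ j i, 0 ≤ L j i := by
    intro j i; rw [hLmem]; split <;> norm_num
  have hLsq : ∀ j i, L j i * L j i = L j i := by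
    intro j i; rw [hLmem]; split <;> norm_num
  have hLrow : ∀ j, ∑ i, L j i = (w:ℝ) := by
    intro j
    have h1 : ∑ i, L j i = ((Finset.univ.filter fun i => H j i = 1).card : ℝ) := by
      simp [hLmem, Finset.sum_boole]
    have h2 := hrow j
    rw [rowSupp] at h2
    rw [h1, h2]
  have hLcol : ∀ i, ∑ j, L j i = (w:ℝ) := by
    intro i
    have h1 : ∑ j, L j i = ((Finset.univ.filter fun j => H j i = 1).card : ℝ) := by
      simp [hLmem, Finset.sum_boole]
    rw [h1, hcol i]
  -- symmetry of A
  have hA : A.IsHermitian := by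
    rw [hAdef, ← Matrix.conjTranspose_eq_transpose_of_trivial]
    exact Matrix.isHermitian_conjTranspose_mul_self L
  have hAsymm : ∀ k l, A k l = A l k := by
    intro k l
    calc A k l = Aᴴ k l := by rw [hA]
    _ = star (A l k) := Matrix.conjTranspose_apply _ _ _
    _ = A l k := star_trivial _
  set μ := hA.eigenvalues with hμdef
  set b := hA.eigenvectorBasis with hbdef
  -- inner products on EuclideanSpace as plain sums
  have hip : ∀ u v : EuclideanSpace ℝ (Fin n), (inner ℝ u v : ℝ) = ∑ k, u k * v k := by
    intro u v
    simp [PiLp.inner_apply, RCLike.inner_apply, conj_trivial, mul_comm]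
  have hparseval : ∀ u v : Fin n → ℝ,
      ∑ i, (∑ k, b i k * u k) * (∑ k, b i k * v k) = ∑ k, u k * v k := by
    intro u v
    have h0 := b.sum_inner_mul_inner ((WithLp.equiv 2 (Fin n → ℝ)).symm u)
      ((WithLp.equiv 2 (Fin n → ℝ)).symm v)
    simp only [hip, WithLp.equiv_symm_apply, PiLp.toLp_apply] at h0
    calc ∑ i, (∑ k, b i k * u k) * (∑ k, b i k * v k)
        = ∑ i, (∑ k, u k * b i k) * (∑ k, b i k * v k) := by
          refine Finset.sum_congr rfl fun i _ => ?_
          congr 1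
          exact Finset.sum_congr rfl fun k _ => mul_comm _ _
      _ = ∑ k, u k * v k := h0
  have hBortho : ∀ i j : Fin n, ∑ k, b i k * b j k = if i = j then (1:ℝ) else 0 := by
    intro i j
    have h2 := orthonormal_iff_ite.mp b.orthonormal i j
    rw [hip] at h2
    exact h2
  have hAb2 : ∀ (i l : Fin n), (∑ k, A l k * b i k) = μ i * b i l := by
    intro i l
    have h := congrFun (hA.mulVec_eigenvectorBasis i) l
    simpa [Matrix.mulVec, dotProduct] using h
  -- key computation: coefficient extraction
  have hkey : ∀ (i : Fin n) (v : Fin n → ℝ),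
      ∑ k, b i k * (A *ᵥ v) k = μ i * ∑ k, b i k * v k := by
    intro i v
    calc ∑ k, b i k * (A *ᵥ v) k
        = ∑ k, ∑ l, b i k * (A k l * v l) := by
          refine Finset.sum_congr rfl fun k _ => ?_
          simp [Matrix.mulVec, dotProduct, Finset.mul_sum]
      _ = ∑ l, (∑ k, A l k * b i k) * v l := by
          rw [Finset.sum_comm]
          refine Finset.sum_congr rfl fun l _ => ?_
          rw [Finset.sum_mul]
          refine Finset.sum_congr rfl fun k _ => ?_
          rw [hAsymm k l]; ring
      _ = ∑ l, (μ i * b i l) * v l := by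
          refine Finset.sum_congr rfl fun l _ => ?_
          rw [hAb2 i l]
      _ = μ i * ∑ k, b i k * v k := by
          rw [Finset.mul_sum]
          exact Finset.sum_congr rfl fun k _ => by ring
  -- quadratic form identity
  have hQgen : ∀ v : Fin n → ℝ, ∑ k, v k * (A *ᵥ v) k = ∑ j, ((L *ᵥ v) j)^2 := by
    intro v
    calc ∑ k, v k * (A *ᵥ v) k
        = ∑ k, ∑ j, (L j k * v k) * (L *ᵥ v) j := by
          refine Finset.sum_congr rfl fun k _ => ?_
          rw [hAdef, ← Matrix.mulVec_mulVec]
          simp only [Matrix.mulVec, dotProduct, Matrix.transpose_apply, Finset.mul_sum]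
          exact Finset.sum_congr rfl fun j _ => Finset.sum_congr rfl fun l _ => by ring
      _ = ∑ j, ((L *ᵥ v) j)^2 := by
          rw [Finset.sum_comm]
          refine Finset.sum_congr rfl fun j _ => ?_
          have h6 : ∑ k, (L j k * v k) * (L *ᵥ v) j = (∑ k, L j k * v k) * (L *ᵥ v) j :=
            (Finset.sum_mul _ _ _).symm
          have h5 : (L *ᵥ v) j = ∑ k, L j k * v k := rfl
          rw [h6, ← h5, sq]
  -- Schur-type bound
  have hSchur : ∀ v : Fin n → ℝ, ∑ j, ((L *ᵥ v) j)^2 ≤ (w:ℝ)^2 * ∑ k, v k ^ 2 := by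
    intro v
    have hstep : ∀ j, ((L *ᵥ v) j)^2 ≤ (w:ℝ) * ∑ i, L j i * v i ^ 2 := by
      intro j
      have h1 : (L *ᵥ v) j = ∑ i, L j i * (L j i * v i) := by
        simp only [Matrix.mulVec, dotProduct]
        exact Finset.sum_congr rfl fun i _ => by rw [← mul_assoc, hLsq]
      have h2 := Finset.sum_mul_sq_le_sq_mul_sq Finset.univ (fun i => L j i)
        (fun i => L j i * v i)
      rw [h1]
      calc (∑ i, L j i * (L j i * v i))^2
          ≤ (∑ i, (L j i) ^2) * (∑ i, (L j i * v i)^2) := h2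
        _ = (w:ℝ) * ∑ i, L j i * v i ^2 := by
            have e1 : ∑ i, (L j i) ^ 2 = (w:ℝ) := by
              rw [← hLrow j]
              exact Finset.sum_congr rfl fun i _ => by rw [sq, hLsq]
            have e2 : ∑ i, (L j i * v i)^2 = ∑ i, L j i * v i ^2 := by
              refine Finset.sum_congr rfl fun i _ => ?_
              rw [mul_pow, sq (L j i), hLsq]
            rw [e1, e2]
    calc ∑ j, ((L *ᵥ v) j)^2 ≤ ∑ j, (w:ℝ) * ∑ i, L j i * v i ^2 :=
          Finset.sum_le_sum fun j _ => hstep j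
      _ = (w:ℝ) * ∑ j, ∑ i, L j i * v i ^2 := (Finset.mul_sum _ _ _).symm
      _ = (w:ℝ) * ∑ i, ∑ j, L j i * v i ^2 := by rw [Finset.sum_comm]
      _ = (w:ℝ) * ∑ i, (w:ℝ) * v i ^2 := by
          congr 1
          refine Finset.sum_congr rfl fun i _ => ?_
          rw [← Finset.sum_mul, hLcol i]
      _ = (w:ℝ)^2 * ∑ k, v k ^ 2 := by
          rw [← Finset.mul_sum]; ring
  -- eigenvalues: sign and upper bound
  have hmuval : ∀ i, μ i = ∑ j, ((L *ᵥ (fun k => b i k)) j)^2 := by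
    intro i
    have e1 : ∑ k, b i k * ((A *ᵥ (fun k' => b i k')) k) = μ i := by
      rw [hkey i (fun k' => b i k')]
      have h7 := hBortho i i
      rw [if_pos rfl] at h7
      rw [h7, mul_one]
    rw [← e1, hQgen (fun k' => b i k')]
  have hmunn : ∀ i, 0 ≤ μ i := by
    intro i
    rw [hmuval i]
    exact Finset.sum_nonneg fun j _ => sq_nonneg _
  have hmuub : ∀ i, μ i ≤ (w:ℝ)^2 := by
    intro i
    have e1 : ∑ k, (b i k) ^ 2 = 1 := by
      have := hBortho i i
      rw [if_pos rfl] at this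
      rw [← this]
      exact Finset.sum_congr rfl fun k _ => sq _
    calc μ i = ∑ j, ((L *ᵥ (fun k => b i k)) j)^2 := hmuval i
      _ ≤ (w:ℝ)^2 * ∑ k, (b i k) ^2 := hSchur _
      _ = (w:ℝ)^2 := by rw [e1, mul_one]
  -- roots of the characteristic polynomial
  have hroots : (eigMult A) = Multiset.map μ Finset.univ.val := by
    rw [eigMult, aux_hermitian_charpoly_roots A hA]
  -- A *ᵥ 1 = w² 1
  have hAone : A *ᵥ (fun _ => (1:ℝ)) = fun _ => (w:ℝ)^2 := by
    funext i
    have h1 : (A *ᵥ (fun _ => (1:ℝ))) i = ∑ k, A i k := by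
      simp [Matrix.mulVec, dotProduct]
    rw [h1]
    calc ∑ k, A i k = ∑ k, ∑ j, L j i * L j k := by
          refine Finset.sum_congr rfl fun k _ => ?_
          rw [hAdef, Matrix.mul_apply]
          exact Finset.sum_congr rfl fun j _ => by rw [Matrix.transpose_apply]
      _ = ∑ j, L j i * ∑ k, L j k := by
          rw [Finset.sum_comm]
          exact Finset.sum_congr rfl fun j _ => (Finset.mul_sum _ _ _).symm
      _ = ∑ j, L j i * (w:ℝ) := Finset.sum_congr rfl fun j _ => by rw [hLrow j]
      _ = (w:ℝ)^2 := by rw [← Finset.sum_mul, hLcol i, sq]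
  -- coefficients of the all-ones vector
  set d : Fin n → ℝ := fun i => ∑ k, b i k with hddef
  have hd0 : ∀ i, (μ i - (w:ℝ)^2) * d i = 0 := by
    intro i
    have h1 := hkey i (fun _ => (1:ℝ))
    rw [hAone] at h1
    have h2 : ∑ k, b i k * (w:ℝ)^2 = (w:ℝ)^2 * d i := by
      rw [hddef, Finset.mul_sum]
      exact Finset.sum_congr rfl fun k _ => by ring
    have h3 : ∑ k, b i k * (1:ℝ) = d i := by
      rw [hddef]
      exact Finset.sum_congr rfl fun k _ => by ring
    rw [h2, h3] at h1
    nlinarith [h1]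
  have hdsum : ∑ i, d i * d i = (n:ℝ) := by
    have h1 := hparseval (fun _ => (1:ℝ)) (fun _ => (1:ℝ))
    simp only [mul_one] at h1
    rw [hddef]
    rw [h1]
    simp
  -- μ₂ is an eigenvalue
  have hμ₂eig : ∃ i, μ i = μ₂ := by
    have h1 : μ₂ ∈ eigMult A := Multiset.mem_of_mem_erase hμ₂.1
    rw [hroots] at h1
    obtain ⟨i, _, hi⟩ := Multiset.mem_map.mp h1
    exact ⟨i, hi⟩
  obtain ⟨i₂, hi₂⟩ := hμ₂eig
  have hμ₂nn : 0 ≤ μ₂ := hi₂ ▸ hmunn i₂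
  have hμ₂ub : μ₂ ≤ (w:ℝ)^2 := hi₂ ▸ hmuub i₂
  -- set up the vectors y, s and the scalars S, P, Ny, Q
  set y : Fin n → ℝ := fun i => ∑ bb, x (i, bb) with hydef
  set s : Fin n → ℝ := fun j => ∑ i ∈ rowSupp H j, y i with hsdef
  set S : ℝ := ∑ i, y i with hSdef
  set P : ℝ := ∑ p, x p ^ 2 with hPdef
  set Ny : ℝ := ∑ i, y i * y i with hNydef
  set Q : ℝ := ∑ j, ((L *ᵥ y) j)^2 with hQdef
  have hynn : ∀ i, 0 ≤ y i := fun i => Finset.sum_nonneg fun bb _ => hxnn _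
  have hxsum : ∑ p : Fin n × Fin m, x p = S := by
    rw [hSdef, Fintype.sum_prod_type]
  have hPsum : P = ∑ i, ∑ bb, x (i, bb) ^ 2 := by
    rw [hPdef, Fintype.sum_prod_type]
  have hLy : ∀ j, (L *ᵥ y) j = s j := by
    intro j
    have h1 : (L *ᵥ y) j = ∑ i, L j i * y i := rfl
    have h2 : s j = ∑ i ∈ Finset.univ.filter (fun i => H j i = 1), y i := rfl
    rw [h1, h2, Finset.sum_filter]
    refine Finset.sum_congr rfl fun i _ => ?_
    rw [hLmem]
    split <;> simp
  -- the support of rows of Ht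
  have hsuppt : ∀ (j : Fin n) (a : Fin m),
      rowSupp Ht (j, a) = (rowSupp H j) ×ˢ (Finset.univ : Finset (Fin m)) := by
    intro j a
    ext ⟨i, bb⟩
    simp only [rowSupp, Finset.mem_filter, Finset.mem_univ, true_and, and_true,
      Finset.mem_product, hHt, Matrix.kroneckerMap_apply, Matrix.of_apply, mul_one]
  -- cone inequalities
  have hb0 : (0:ℕ) < m := hm
  have hcone2 : ∀ j : Fin n, ∀ i ∈ rowSupp H j, ∀ bb : Fin m, 2 * x (i, bb) ≤ s j := by
    intro j i hi bb
    have hmem : (i, bb) ∈ rowSupp Ht (j, ⟨0, hb0⟩) := by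
      rw [hsuppt]
      exact Finset.mem_product.mpr ⟨hi, Finset.mem_univ _⟩
    have h := hcone (j, ⟨0, hb0⟩) (i, bb) hmem
    have hsum : x (i,bb) + ∑ p ∈ (rowSupp Ht (j, ⟨0, hb0⟩)).erase (i,bb), x p
        = ∑ p ∈ rowSupp Ht (j, ⟨0, hb0⟩), x p := Finset.add_sum_erase _ _ hmem
    have hfull : ∑ p ∈ rowSupp Ht (j, ⟨0, hb0⟩), x p = s j := by
      rw [hsuppt, Finset.sum_product, hsdef]
    linarith
  -- cone lower bound : 2 w P ≤ Q
  have hQlb : 2 * (w:ℝ) * P ≤ Q := by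
    have step1 : ∀ j, ∑ i ∈ rowSupp H j, (∑ bb, 2 * x (i,bb) ^2) ≤ s j ^2 := by
      intro j
      have h1 : s j ^ 2 = ∑ i ∈ rowSupp H j, y i * s j := by
        rw [sq, hsdef, ← Finset.sum_mul]
      rw [h1]
      refine Finset.sum_le_sum fun i hi => ?_
      have h2 : y i * s j = ∑ bb, x (i, bb) * s j := by
        rw [hydef, Finset.sum_mul]
      rw [h2]
      refine Finset.sum_le_sum fun bb _ => ?_
      have h3 := hcone2 j i hi bb
      nlinarith [hxnn (i, bb)]
    have step2 : ∑ j, ∑ i ∈ rowSupp H j, (∑ bb, 2 * x (i,bb) ^2)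
        = ∑ i, (w:ℝ) * (∑ bb, 2 * x (i,bb) ^2) := by
      have h1 : ∀ j, ∑ i ∈ rowSupp H j, (∑ bb, 2 * x (i,bb) ^2)
          = ∑ i, (if H j i = 1 then (∑ bb, 2 * x (i,bb) ^2) else 0) := by
        intro j
        rw [rowSupp, Finset.sum_filter]
      rw [Finset.sum_congr rfl fun j _ => h1 j, Finset.sum_comm]
      refine Finset.sum_congr rfl fun i _ => ?_
      have h2 : ∑ j, (if H j i = 1 then (∑ bb, 2 * x (i,bb) ^2) else 0)
          = (∑ j, if H j i = 1 then (1:ℝ) else 0) * (∑ bb, 2 * x (i,bb) ^2) := by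
        rw [Finset.sum_mul]
        refine Finset.sum_congr rfl fun j _ => ?_
        split <;> simp
      rw [h2]
      congr 1
      rw [Finset.sum_boole, hcol i]
    have step3 : ∑ i, (w:ℝ) * (∑ bb, 2 * x (i,bb) ^2) = 2 * (w:ℝ) * P := by
      rw [hPsum, Finset.mul_sum]
      rw [← Finset.sum_congr rfl fun i (_ : i ∈ Finset.univ) => rfl]
      refine Finset.sum_congr rfl fun i _ => ?_
      rw [Finset.mul_sum, Finset.mul_sum]
      exact Finset.sum_congr rfl fun bb _ => by ring
    calc 2 * (w:ℝ) * P = ∑ j, ∑ i ∈ rowSupp H j, (∑ bb, 2 * x (i,bb) ^2) := by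
          rw [step2, step3]
      _ ≤ ∑ j, s j ^ 2 := Finset.sum_le_sum fun j _ => step1 j
      _ = Q := by
          rw [hQdef]
          exact Finset.sum_congr rfl fun j _ => by rw [hLy j]
  -- Cauchy–Schwarz per block: Ny ≤ m P
  have hNyP : Ny ≤ (m:ℝ) * P := by
    rw [hNydef, hPsum, Finset.mul_sum]
    refine Finset.sum_le_sum fun i _ => ?_
    have h1 : y i * y i = (∑ bb, x (i, bb))^2 := by rw [hydef, sq]
    rw [h1]
    have h2 := sq_sum_le_card_mul_sum_sq (s := (Finset.univ : Finset (Fin m)))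
      (f := fun bb => x (i, bb))
    simpa using h2
  -- positivity of P
  have hxne : x ≠ 0 := by simpa using hx0
  have hP : 0 < P := by
    obtain ⟨p, hp⟩ : ∃ p, x p ≠ 0 := by
      by_contra h
      push_neg at h
      exact hxne (funext h)
    rw [hPdef]
    refine Finset.sum_pos' (fun q _ => sq_nonneg _) ⟨p, Finset.mem_univ p, ?_⟩
    positivity
  -- rewrite the goal
  have hgoal : wAWGNC x = S^2 / P := by
    rw [wAWGNC, hxsum, hPdef]
  rcases lt_or_eq_of_le hμ₂ub with hlt | heq
  · -- main case : μ₂ < w²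
    -- existence of the top eigenvalue index
    have hk0 : ∃ k₀, μ k₀ = (w:ℝ)^2 := by
      by_contra h
      push_neg at h
      have hall : ∀ i, d i = 0 := by
        intro i
        have h1 := hd0 i
        have h2 : μ i - (w:ℝ)^2 ≠ 0 := sub_ne_zero_of_ne (h i)
        exact (mul_eq_zero.mp h1).resolve_left h2
      have : (n:ℝ) = 0 := by
        rw [← hdsum]
        simp [hall]
      linarith
    obtain ⟨k₀, hk₀⟩ := hk0
    -- the erased multiset
    have herased : (eigMult A).erase ((w:ℝ)^2)
        = Multiset.map μ (Finset.univ.val.erase k₀) := by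
      rw [hroots]
      conv_lhs => rw [← Multiset.cons_erase
        (Finset.mem_val.mpr (Finset.mem_univ k₀) : k₀ ∈ Finset.univ.val)]
      rw [Multiset.map_cons, hk₀, Multiset.erase_cons_head]
    have hother : ∀ i, i ≠ k₀ → μ i ≤ μ₂ := by
      intro i hi
      refine hμ₂.2 _ ?_
      rw [herased]
      exact Multiset.mem_map.mpr ⟨i, (Multiset.mem_erase_of_ne hi).mpr
        (Finset.mem_val.mpr (Finset.mem_univ i)), rfl⟩
    have hdzero : ∀ i, i ≠ k₀ → d i = 0 := by
      intro i hi
      have h1 := hd0 i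
      have h2 : μ i - (w:ℝ)^2 ≠ 0 := by
        have := hother i hi
        intro hc
        nlinarith
      exact (mul_eq_zero.mp h1).resolve_left h2
    -- coefficients of y
    set c : Fin n → ℝ := fun i => ∑ k, b i k * y k with hcdef
    have hcsum : ∑ i, c i * c i = Ny := hparseval y y
    have hdc : ∑ i, d i * c i = S := by
      have h1 := hparseval (fun _ => (1:ℝ)) y
      simp only [mul_one, one_mul] at h1
      calc ∑ i, d i * c i = ∑ i, (∑ k, b i k) * (∑ k, b i k * y k) := rfl
        _ = S := by rw [h1, hSdef]
    have hQc : Q = ∑ i, μ i * (c i * c i) := by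
      have h1 : ∑ k, y k * (A *ᵥ y) k = ∑ i, (∑ k, b i k * y k) * (∑ k, b i k * (A *ᵥ y) k) :=
        (hparseval y (A *ᵥ y)).symm
      have h2 : ∀ i, (∑ k, b i k * y k) * (∑ k, b i k * (A *ᵥ y) k) = μ i * (c i * c i) := by
        intro i
        rw [hkey i y, hcdef]
        ring
      rw [hQdef, ← hQgen y, h1]
      exact Finset.sum_congr rfl fun i _ => h2 i
    -- concentration of the all-ones vector on k₀
    have hdk0 : d k₀ * d k₀ = (n:ℝ) := by
      rw [← hdsum]
      symm
      apply Fintype.sum_eq_single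
      intro i hi
      rw [hdzero i hi, zero_mul]
    have hSk0 : S = d k₀ * c k₀ := by
      rw [← hdc]
      apply Fintype.sum_eq_single
      intro i hi
      rw [hdzero i hi, zero_mul]
    have hck0 : (n:ℝ) * (c k₀ * c k₀) = S^2 := by
      rw [hSk0, ← hdk0]; ring
    -- upper bound on n Q
    have hsplit : Q = μ k₀ * (c k₀ * c k₀) + ∑ i ∈ Finset.univ.erase k₀, μ i * (c i * c i) := by
      rw [hQc]
      exact (Finset.add_sum_erase _ (fun i => μ i * (c i * c i)) (Finset.mem_univ k₀)).symm
    have hrest : ∑ i ∈ Finset.univ.erase k₀, μ i * (c i * c i)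
        ≤ μ₂ * (Ny - c k₀ * c k₀) := by
      have h1 : ∑ i ∈ Finset.univ.erase k₀, μ i * (c i * c i)
          ≤ ∑ i ∈ Finset.univ.erase k₀, μ₂ * (c i * c i) := by
        refine Finset.sum_le_sum fun i hi => ?_
        have h2 := hother i (Finset.ne_of_mem_erase hi)
        nlinarith [mul_self_nonneg (c i)]
      have h3 : ∑ i ∈ Finset.univ.erase k₀, μ₂ * (c i * c i) = μ₂ * (Ny - c k₀ * c k₀) := by
        rw [← Finset.mul_sum]
        congr 1
        have h4 : c k₀ * c k₀ + ∑ i ∈ Finset.univ.erase k₀, c i * c i = Ny := by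
          rw [← hcsum]
          exact Finset.add_sum_erase _ (fun i => c i * c i) (Finset.mem_univ k₀)
        linarith
      linarith
    have hQub : (n:ℝ) * Q ≤ (w:ℝ)^2 * S^2 + μ₂ * ((n:ℝ) * Ny - S^2) := by
      have h1 : (n:ℝ) * Q = (w:ℝ)^2 * ((n:ℝ) * (c k₀ * c k₀))
          + (n:ℝ) * ∑ i ∈ Finset.univ.erase k₀, μ i * (c i * c i) := by
        rw [hsplit, hk₀]; ring
      rw [h1, hck0]
      have h2 : (n:ℝ) * ∑ i ∈ Finset.univ.erase k₀, μ i * (c i * c i)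
          ≤ (n:ℝ) * (μ₂ * (Ny - c k₀ * c k₀)) :=
        mul_le_mul_of_nonneg_left hrest (le_of_lt hncast)
      have h3 : (n:ℝ) * (μ₂ * (Ny - c k₀ * c k₀)) = μ₂ * ((n:ℝ) * Ny - S^2) := by
        rw [← hck0]; ring
      linarith
    -- final assembly
    rw [hgoal]
    have hdpos : 0 < (w:ℝ)^2 - μ₂ := by linarith
    rw [div_le_div_iff₀ hdpos hP]
    have h1 : (n:ℝ) * (2 * (w:ℝ) * P) ≤ (n:ℝ) * Q :=
      mul_le_mul_of_nonneg_left hQlb (le_of_lt hncast)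
    have h2 : μ₂ * ((n:ℝ) * Ny - S^2) ≤ μ₂ * ((n:ℝ) * ((m:ℝ) * P) - S^2) := by
      refine mul_le_mul_of_nonneg_left ?_ hμ₂nn
      have := mul_le_mul_of_nonneg_left hNyP (le_of_lt hncast)
      linarith
    nlinarith [h1, hQub, h2]
  · -- degenerate case : μ₂ = w²
    rw [heq, sub_self, div_zero, hgoal]
    exact div_nonneg (sq_nonneg _) (le_of_lt hP)
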